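/- The function f(x) = sqrt(c/(2π x³)) exp(−c/(2x)) for x > 0 (and 0 for x ≤ 0), with c > 0, is a probability density function: it is nonnegative and integrates to 1 over the real line. -/
import Mathlib


open MeasureTheory Set Real

/-- The Lévy density with location 0 and scale `c`. -/
noncomputable def levyPDF (c x : ℝ) : ℝ :=
  if 0 < x then Real.sqrt (c / (2 * Real.pi * x ^ 3)) * Real.exp (-c / (2 * x)) else 0

theorem stmt_4 (c : ℝ) (hc : 0 < c) :
    (∀ x : ℝ, 0 ≤ levyPDF c x) ∧ (∫ x : ℝ, levyPDF c x) = 1 := by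
  have hπ := Real.pi_pos
  constructor
  · intro x
    unfold levyPDF
    split <;> positivity
  · set f : ℝ → ℝ := fun x : ℝ => Real.sqrt (c / (2 * π * x ^ 3)) * Real.exp (-c / (2 * x)) with hf
    have h1 : (∫ x : ℝ, levyPDF c x) = ∫ x in Ioi (0:ℝ), f x := by
      have : (fun x => levyPDF c x) = (Ioi (0:ℝ)).indicator f := by
        ext x
        simp [levyPDF, Set.indicator_apply, mem_Ioi, hf]
      rw [this, integral_indicator measurableSet_Ioi]
    rw [h1]
    have h2 := integral_comp_rpow_Ioi f (p := -1) (by norm_num)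
    rw [← h2]
    have h3 : ∀ x ∈ Ioi (0:ℝ),
        (|(-1:ℝ)| * x ^ ((-1:ℝ) - 1)) • f (x ^ (-1:ℝ))
        = Real.sqrt (c / (2 * π)) * (x ^ ((1:ℝ)/2 - 1) * Real.exp (-(c/2 * x))) := by
      intro x hx
      have hx : (0:ℝ) < x := hx
      rw [Real.rpow_neg_one]
      simp only [hf, smul_eq_mul, abs_neg, abs_one, one_mul]
      have e1 : c / (2 * π * (x⁻¹) ^ 3) = c / (2 * π) * x ^ 3 := by
        field_simp
      have e2 : -c / (2 * x⁻¹) = -(c / 2 * x) := by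
        field_simp
      rw [e1, e2, Real.sqrt_mul (by positivity)]
      have e3 : Real.sqrt (x ^ 3) = x ^ ((3:ℝ)/2) := by
        rw [Real.sqrt_eq_rpow, ← Real.rpow_natCast x 3, ← Real.rpow_mul hx.le]
        norm_num
      rw [e3, show x ^ ((-1:ℝ) - 1) = x ^ (-2:ℝ) by norm_num,
        show ((1:ℝ)/2 - 1) = (-2:ℝ) + 3/2 by norm_num, Real.rpow_add hx]
      ring
    rw [setIntegral_congr_fun measurableSet_Ioi h3, integral_const_mul,
      integral_rpow_mul_exp_neg_mul_Ioi one_half_pos (by positivity : (0:ℝ) < c/2),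
      Real.Gamma_one_half_eq, ← Real.sqrt_eq_rpow,
      ← Real.sqrt_mul (by positivity), ← Real.sqrt_mul (by positivity)]
    rw [show c / (2 * π) * (1 / (c / 2) * π) = 1 by field_simp]
    exact Real.sqrt_one
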